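/- Define G_n(q) = (q²;q²)_n / (q^{n(n−1)/2}(1−q²)^n). In the Hopf *-algebra pairing between U_q(su(2)) and Pol(SU_q(2)) determined by ⟨K,a⟩ = q^{−1/2}, ⟨K,a*⟩ = q^{1/2}, ⟨E,b⟩ = 1, ⟨F,−qb*⟩ = 1 (all other generator pairings zero), one has for all s,r,t,n,l ∈ ℕ and m ∈ ℤ: ⟨K^m E^n F^l, a^r b^s (−qb*)^t⟩ = δ_{s,n} δ_{t,l} q^{m(−r+s−t)/2} q^{r(n+l)/2} G_n(q) G_l(q). -/

import Mathlib

open TensorProduct Module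

/-- `(q²;q²)_n = ∏_{j=1}^n (1-q^{2j})`. -/
noncomputable def qPochN (q : ℝ) (n : ℕ) : ℝ := ∏ j ∈ Finset.range n, (1 - q ^ (2 * (j + 1)))

/-- `G_n(q) = (q²;q²)_n / (q^{n(n-1)/2} (1-q²)^n)`. -/
noncomputable def Gfun (q : ℝ) (n : ℕ) : ℝ :=
  qPochN q n / (q ^ (n * (n - 1) / 2) * (1 - q ^ 2) ^ n)

/-- Integer powers `K^m` of the invertible generator `K` (with inverse `Ki`). -/
noncomputable def zpowGen {U : Type} [Monoid U] (K Ki : U) (m : ℤ) : U :=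
  if 0 ≤ m then K ^ m.toNat else Ki ^ (-m).toNat

namespace PairingProof

/-- `Qc q x = q ^ x` as a complex number (real rpow). -/
noncomputable def Qc (q : ℝ) (x : ℝ) : ℂ := ((q ^ x : ℝ) : ℂ)

variable {q : ℝ}

lemma Qc_mul (hq : 0 < q) (x y : ℝ) : Qc q x * Qc q y = Qc q (x + y) := by
  simp [Qc, Real.rpow_add hq, Complex.ofReal_mul]

lemma Qc_zero : Qc q 0 = 1 := by simp [Qc]

lemma Qc_neg (hq : 0 < q) (x : ℝ) : Qc q (-x) = (Qc q x)⁻¹ := by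
  simp [Qc, Real.rpow_neg hq.le]

lemma Qc_natCast (hq : 0 < q) (k : ℕ) : ((q : ℂ)) ^ k = Qc q k := by
  simp [Qc, Real.rpow_natCast]

lemma Qc_inv_natCast (hq : 0 < q) (k : ℕ) : ((q : ℂ))⁻¹ ^ k = Qc q (-(k:ℝ)) := by
  rw [Qc_neg hq, ← Qc_natCast hq, inv_pow]

/-- coefficients of `Δ(E^n)`. -/
noncomputable def gam (c : ℂ) : ℕ → ℕ → ℂ
  | 0, 0 => 1
  | 0, _+1 => 0
  | n+1, 0 => gam c n 0
  | n+1, k+1 => c ^ (k+1) * gam c n (k+1) + c⁻¹ ^ (n - k) * gam c n k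

lemma gam_zero (c : ℂ) : ∀ n, gam c n 0 = 1 := by
  intro n; induction n with
  | zero => rfl
  | succ n ih => rw [gam, ih]

lemma gam_of_lt (c : ℂ) : ∀ n k, n < k → gam c n k = 0 := by
  intro n
  induction n with
  | zero => intro k hk; match k, hk with | k+1, _ => rfl
  | succ n ih =>
    intro k hk
    match k, hk with
    | k+1, hk =>
      rw [gam, ih (k+1) (by omega), ih k (by omega)]
      ring

lemma gam_succ_one (c : ℂ) (n : ℕ) :
    gam c (n+1) 1 = c * gam c n 1 + c⁻¹ ^ n := by
  rw [gam, gam_zero]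
  rw [Nat.sub_zero]
  ring

lemma gam_one_sum (c : ℂ) (hc : c ≠ 0) : ∀ n, gam c n 1 = ∑ i ∈ Finset.range n, c ^ ((n : ℤ) - 1 - 2 * i) := by
  intro n
  induction n with
  | zero => simp [gam]
  | succ n ih =>
    rw [gam_succ_one, ih, Finset.mul_sum, Finset.sum_range_succ]
    congr 1
    · apply Finset.sum_congr rfl
      intro i hi
      have h1 : ((n+1 : ℕ) : ℤ) - 1 - 2*i = 1 + ((n:ℤ) - 1 - 2*i) := by push_cast; ring
      rw [h1, zpow_add₀ hc, zpow_one]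
    · rw [inv_pow, ← zpow_natCast c n, ← zpow_neg]
      congr 1
      push_cast; ring

lemma gam_inv_one (c : ℂ) (hc : c ≠ 0) (n : ℕ) : gam c⁻¹ n 1 = gam c n 1 := by
  rw [gam_one_sum c hc, gam_one_sum c⁻¹ (inv_ne_zero hc)]
  rw [← Finset.sum_range_reflect]
  apply Finset.sum_congr rfl
  intro i hi
  simp only [Finset.mem_range] at hi
  rw [inv_zpow, ← zpow_neg]
  congr 1
  push_cast
  omega

lemma sq_ne_one (hq0 : 0 < q) (hq1 : q < 1) : ((q:ℂ)) ^ 2 ≠ 1 := by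
  have h : q ^ 2 < 1 := by nlinarith
  intro hh
  have : ((q ^ 2 : ℝ) : ℂ) = ((1 : ℝ) : ℂ) := by push_cast; exact hh
  have := Complex.ofReal_injective this
  nlinarith

lemma gam_one_closed (hq0 : 0 < q) (hq1 : q < 1) (n : ℕ) :
    gam (q : ℂ) (n+1) 1 = Qc q (-(n:ℝ)) * ((1 - (q:ℂ) ^ (2*(n+1))) / (1 - (q:ℂ) ^ 2)) := by
  have hq : (q : ℂ) ≠ 0 := by exact_mod_cast hq0.ne'
  have hq2 : (q : ℂ) ^ 2 ≠ 1 := sq_ne_one hq0 hq1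
  rw [gam_one_sum _ hq]
  have key : ∀ i ∈ Finset.range (n+1), (q:ℂ) ^ (((n+1:ℕ):ℤ) - 1 - 2*i) = Qc q (-(n:ℝ)) * ((q:ℂ)^2)^(n - i) := by
    intro i hi
    simp only [Finset.mem_range] at hi
    have h1 : ((n+1:ℕ):ℤ) - 1 - 2*i = -(n:ℤ) + 2 * ((n : ℤ) - i) := by push_cast; ring
    rw [h1, zpow_add₀ hq]
    congr 1
    · rw [zpow_neg, zpow_natCast, Qc_natCast hq0, ← Qc_neg hq0]
    · rw [← pow_mul, ← zpow_natCast (q:ℂ) (2*(n-i))]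
      congr 1
      push_cast
      omega
  rw [Finset.sum_congr rfl key, ← Finset.mul_sum]
  congr 1
  have hrefl : ∑ i ∈ Finset.range (n+1), ((q:ℂ)^2)^(n - i) = ∑ i ∈ Finset.range (n+1), ((q:ℂ)^2)^i := by
    rw [← Finset.sum_range_reflect]
    apply Finset.sum_congr rfl
    intro i hi
    simp only [Finset.mem_range] at hi
    congr 1
    omega
  rw [hrefl, geom_sum_eq hq2, pow_mul]
  have h1 : (1 : ℂ) - (q:ℂ)^2 ≠ 0 := fun hh => hq2 (by linear_combination -hh)
  rw [div_eq_div_iff (sub_ne_zero.2 hq2) h1]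
  ring

section Comm
variable {A : Type} [Ring A] [Algebra ℂ A]

lemma mul_pow_smul (x y : A) (c : ℂ) (h : x * y = c • (y * x)) (r : ℕ) :
    x * y ^ r = c ^ r • (y ^ r * x) := by
  induction r with
  | zero => simp
  | succ r ih =>
    rw [pow_succ, ← mul_assoc, ih, smul_mul_assoc, mul_assoc, h, mul_smul_comm,
      ← mul_assoc, ← pow_succ, smul_smul, ← pow_succ]

lemma pow_mul_pow_smul (x y : A) (c : ℂ) (h : x * y = c • (y * x)) (p r : ℕ) :
    x ^ p * y ^ r = c ^ (p * r) • (y ^ r * x ^ p) := by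
  induction p with
  | zero => simp
  | succ p ih =>
    rw [pow_succ, mul_assoc, mul_pow_smul x y c h r, mul_smul_comm, ← mul_assoc, ih,
      smul_mul_assoc, smul_smul, mul_assoc, ← pow_succ, ← pow_add]
    congr 2
    ring

end Comm

section ZP
variable {U : Type} [Ring U] (K Ki : U) (hKi : Ki * K = 1) (hiK : K * Ki = 1)

/-- the unit corresponding to `K`. -/
def Kunit : Uˣ := ⟨K, Ki, hiK, hKi⟩

lemma zpowGen_eq (m : ℤ) : zpowGen K Ki m = ((Kunit K Ki hKi hiK ^ m : Uˣ) : U) := by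
  rcases m with n | n
  · rw [zpowGen]
    simp [Kunit, Units.val_pow_eq_pow_val]
  · have h1 : (-Int.negSucc n).toNat = n + 1 := by simp [Int.neg_negSucc]
    rw [zpowGen, if_neg (not_le.mpr (Int.negSucc_lt_zero n)), h1, zpow_negSucc, ← inv_pow,
      Units.val_pow_eq_pow_val]
    rfl

include hKi hiK

lemma zpowGen_add (m₁ m₂ : ℤ) :
    zpowGen K Ki (m₁ + m₂) = zpowGen K Ki m₁ * zpowGen K Ki m₂ := by
  rw [zpowGen_eq K Ki hKi hiK, zpowGen_eq K Ki hKi hiK, zpowGen_eq K Ki hKi hiK,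
    zpow_add, Units.val_mul]

omit hKi hiK in
lemma zpowGen_zero : zpowGen K Ki 0 = 1 := by simp [zpowGen]

omit hKi hiK in
lemma zpowGen_natCast (p : ℕ) : zpowGen K Ki (p : ℤ) = K ^ p := by
  simp [zpowGen]

omit hKi hiK in
lemma zpowGen_neg_natCast (p : ℕ) : zpowGen K Ki (-(p : ℤ)) = Ki ^ p := by
  rcases Nat.eq_zero_or_pos p with h | h
  · subst h; simp [zpowGen]
  · rw [zpowGen, if_neg (by omega)]
    congr 1
    omega

lemma zpowGen_mul_pow (m : ℤ) (p : ℕ) :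
    zpowGen K Ki m * K ^ p = zpowGen K Ki (m + p) := by
  rw [zpowGen_add K Ki hKi hiK, zpowGen_natCast]

lemma zpowGen_mul_ipow (m : ℤ) (p : ℕ) :
    zpowGen K Ki m * Ki ^ p = zpowGen K Ki (m - p) := by
  rw [sub_eq_add_neg, zpowGen_add K Ki hKi hiK, zpowGen_neg_natCast]

end ZP

section GF
variable {q : ℝ}

lemma tri_eq (n : ℕ) : n * (n - 1) / 2 = ∑ i ∈ Finset.range n, i := by
  have := Finset.sum_range_id_mul_two n
  omega

lemma Gfun_zero : Gfun q 0 = 1 := by simp [Gfun, qPochN]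

lemma Gfun_succ (hq0 : 0 < q) (hq1 : q < 1) (n : ℕ) :
    Gfun q (n+1) = Gfun q n * ((1 - q^(2*(n+1))) / (q^n * (1-q^2))) := by
  have h1 : (1:ℝ) - q^2 ≠ 0 := by nlinarith
  have h2 : q ≠ 0 := hq0.ne'
  have he : (n+1) * ((n+1) - 1) / 2 = n * (n-1) / 2 + n := by
    rw [tri_eq, tri_eq]
    simp [Finset.sum_range_succ]
  rw [Gfun, Gfun, he, qPochN, Finset.prod_range_succ, ← qPochN, div_mul_div_comm]
  congr 1
  rw [pow_add]
  ring

lemma Gfun_succ_c (hq0 : 0 < q) (hq1 : q < 1) (n : ℕ) :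
    ((Gfun q (n+1) : ℝ) : ℂ) = gam (q:ℂ) (n+1) 1 * ((Gfun q n : ℝ) : ℂ) := by
  have h1 : (1:ℝ) - q^2 ≠ 0 := by nlinarith
  have h1c : (1:ℂ) - (q:ℂ)^2 ≠ 0 := by
    intro hh
    apply h1
    have : (((1 - q^2 : ℝ)) : ℂ) = 0 := by push_cast; linear_combination hh
    exact_mod_cast this
  have h2 : q ≠ 0 := hq0.ne'
  have h2c : (q:ℂ) ≠ 0 := by exact_mod_cast h2
  rw [Gfun_succ hq0 hq1 n, gam_one_closed hq0 hq1 n]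
  have hQ : Qc q (-(n:ℝ)) = ((q:ℂ)^n)⁻¹ := by
    rw [Qc_neg hq0, ← Qc_natCast hq0]
  rw [hQ]
  push_cast
  field_simp

end GF

universe u v

structure Setup (q : ℝ) (U P : Type) [Ring U] [Algebra ℂ U] [Ring P] [Algebra ℂ P]
    [StarRing P] where
  K : U
  Ki : U
  E : U
  F : U
  a : P
  b : P
  ΔU : U →ₐ[ℂ] U ⊗[ℂ] U
  ΔP : P →ₐ[ℂ] P ⊗[ℂ] P
  εU : U →ₐ[ℂ] ℂ
  εP : P →ₐ[ℂ] ℂ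
  pr : U →ₗ[ℂ] Dual ℂ P
  hq0 : 0 < q
  hq1 : q < 1
  hKi : Ki * K = 1
  hiK : K * Ki = 1
  hKE : K * E = (q : ℂ) • (E * K)
  hKF : K * F = ((q : ℂ))⁻¹ • (F * K)
  hΔK : ΔU K = K ⊗ₜ K
  hΔKi : ΔU Ki = Ki ⊗ₜ Ki
  hΔE : ΔU E = E ⊗ₜ K + Ki ⊗ₜ E
  hΔF : ΔU F = F ⊗ₜ K + Ki ⊗ₜ F
  hΔa : ΔP a = a ⊗ₜ a - (q : ℂ) • (star b ⊗ₜ b)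
  hΔb : ΔP b = b ⊗ₜ a + star a ⊗ₜ b
  hΔas : ΔP (star a) = star a ⊗ₜ star a - (q : ℂ) • (b ⊗ₜ star b)
  hΔbs : ΔP (star b) = star b ⊗ₜ star a + a ⊗ₜ star b
  hεK : εU K = 1
  hεKi : εU Ki = 1
  hεE : εU E = 0
  hεF : εU F = 0
  hεa : εP a = 1
  hεas : εP (star a) = 1
  hεb : εP b = 0
  hεbs : εP (star b) = 0
  hmulP : ∀ (x : U) (y z : P),
    pr x (y * z) = TensorProduct.dualDistrib ℂ P P (TensorProduct.map pr pr (ΔU x)) (y ⊗ₜ z)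
  hmulU : ∀ (x y : U) (z : P),
    pr (x * y) z = TensorProduct.dualDistrib ℂ P P (pr x ⊗ₜ pr y) (ΔP z)
  hunitP : ∀ x : U, pr x 1 = εU x
  hunitU : ∀ y : P, pr 1 y = εP y
  hKa : pr K a = Qc q (-(1/2 : ℝ))
  hKas : pr K (star a) = Qc q ((1/2 : ℝ))
  hEb : pr E b = 1
  hFbs : pr F (-((q : ℂ) • star b)) = 1
  hKb : pr K b = 0
  hKbs : pr K (star b) = 0
  hEa : pr E a = 0
  hEas : pr E (star a) = 0
  hEbs : pr E (star b) = 0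
  hFa : pr F a = 0
  hFas : pr F (star a) = 0
  hFb : pr F b = 0

namespace Setup

variable {q : ℝ} {U P : Type} [Ring U] [Algebra ℂ U] [Ring P] [Algebra ℂ P] [StarRing P]
variable (S : Setup q U P)

lemma hqc' (hq0 : 0 < q) : (q : ℂ) ≠ 0 := by
  have h := hq0.ne'
  exact_mod_cast h

/-- `⟨F, b*⟩ = -q⁻¹`. -/
lemma hFbs' : S.pr S.F (star S.b) = -((q : ℂ))⁻¹ := by
  have hq := hqc' S.hq0
  have h := S.hFbs
  rw [map_neg, map_smul, smul_eq_mul] at h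
  field_simp
  linear_combination -h

/-- `E * K = q⁻¹ • (K * E)`. -/
lemma hEK : S.E * S.K = ((q : ℂ))⁻¹ • (S.K * S.E) := by
  rw [S.hKE, smul_smul, inv_mul_cancel₀ (hqc' S.hq0), one_smul]

/-- `F * K = q • (K * F)`. -/
lemma hFK : S.F * S.K = (q : ℂ) • (S.K * S.F) := by
  rw [S.hKF, smul_smul, mul_inv_cancel₀ (hqc' S.hq0), one_smul]

/-- `E * Ki = q • (Ki * E)`. -/
lemma hEKi : S.E * S.Ki = (q : ℂ) • (S.Ki * S.E) := by
  have h : S.Ki * (S.K * S.E) * S.Ki = S.E * S.Ki := by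
    rw [← mul_assoc, S.hKi, one_mul]
  rw [← h, S.hKE, mul_smul_comm, smul_mul_assoc]
  congr 1
  rw [mul_assoc, mul_assoc, S.hiK, mul_one]

/-- `F * Ki = q⁻¹ • (Ki * F)`. -/
lemma hFKi : S.F * S.Ki = ((q : ℂ))⁻¹ • (S.Ki * S.F) := by
  have h : S.Ki * (S.K * S.F) * S.Ki = S.F * S.Ki := by
    rw [← mul_assoc, S.hKi, one_mul]
  rw [← h, S.hKF, mul_smul_comm, smul_mul_assoc]
  congr 1
  rw [mul_assoc, mul_assoc, S.hiK, mul_one]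

/-- The normally ordered monomial `K^m E^n F^l`. -/
noncomputable def T (m : ℤ) (n l : ℕ) : U := zpowGen S.K S.Ki m * S.E ^ n * S.F ^ l

lemma prMul_a (X Y : U) : S.pr (X * Y) S.a =
    S.pr X S.a * S.pr Y S.a - (q:ℂ) * (S.pr X (star S.b) * S.pr Y S.b) := by
  rw [S.hmulU, S.hΔa, map_sub, map_smul]
  simp [TensorProduct.dualDistrib_apply, smul_eq_mul]

lemma prMul_as (X Y : U) : S.pr (X * Y) (star S.a) =
    S.pr X (star S.a) * S.pr Y (star S.a) - (q:ℂ) * (S.pr X S.b * S.pr Y (star S.b)) := by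
  rw [S.hmulU, S.hΔas, map_sub, map_smul]
  simp [TensorProduct.dualDistrib_apply, smul_eq_mul]

lemma prMul_b (X Y : U) : S.pr (X * Y) S.b =
    S.pr X S.b * S.pr Y S.a + S.pr X (star S.a) * S.pr Y S.b := by
  rw [S.hmulU, S.hΔb, map_add]
  simp [TensorProduct.dualDistrib_apply]

lemma prMul_bs (X Y : U) : S.pr (X * Y) (star S.b) =
    S.pr X (star S.b) * S.pr Y (star S.a) + S.pr X S.a * S.pr Y (star S.b) := by
  rw [S.hmulU, S.hΔbs, map_add]
  simp [TensorProduct.dualDistrib_apply]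

lemma Qc_ne_zero (hq0 : 0 < q) (x : ℝ) : Qc q x ≠ 0 := by
  simp only [Qc, ne_eq, Complex.ofReal_eq_zero]
  positivity

/-- values of the pairing of `Ki` with the generators -/
lemma prKi_b : S.pr S.Ki S.b = 0 := by
  have h := S.prMul_b S.Ki S.K
  rw [S.hKi, S.hunitU, S.hεb, S.hKa, S.hKb, mul_zero, add_zero] at h
  rcases mul_eq_zero.mp h.symm with h1 | h1
  · exact h1
  · exact absurd h1 (Qc_ne_zero S.hq0 _)

lemma prKi_bs : S.pr S.Ki (star S.b) = 0 := by
  have h := S.prMul_bs S.Ki S.K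
  rw [S.hKi, S.hunitU, S.hεbs, S.hKas, S.hKbs, mul_zero, add_zero] at h
  rcases mul_eq_zero.mp h.symm with h1 | h1
  · exact h1
  · exact absurd h1 (Qc_ne_zero S.hq0 _)

lemma prKi_a : S.pr S.Ki S.a = Qc q (1/2 : ℝ) := by
  have h := S.prMul_a S.Ki S.K
  rw [S.hKi, S.hunitU, S.hεa, S.hKa, S.hKb, mul_zero, mul_zero, sub_zero] at h
  have hne := Qc_ne_zero S.hq0 (-(1/2 : ℝ))
  have h3 : S.pr S.Ki S.a = (Qc q (-(1/2:ℝ)))⁻¹ := by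
    have hc := mul_inv_cancel₀ hne
    calc S.pr S.Ki S.a = S.pr S.Ki S.a * (Qc q (-(1/2:ℝ)) * (Qc q (-(1/2:ℝ)))⁻¹) := by
          rw [hc, mul_one]
      _ = (Qc q (-(1/2:ℝ)))⁻¹ := by rw [← mul_assoc, ← h, one_mul]
  rw [h3, ← Qc_neg S.hq0]
  norm_num

lemma prKi_as : S.pr S.Ki (star S.a) = Qc q (-(1/2) : ℝ) := by
  have h := S.prMul_as S.Ki S.K
  rw [S.hKi, S.hunitU, S.hεas, S.hKas, S.hKbs, mul_zero, mul_zero, sub_zero] at h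
  have hne := Qc_ne_zero S.hq0 ((1/2 : ℝ))
  have h3 : S.pr S.Ki (star S.a) = (Qc q ((1/2:ℝ)))⁻¹ := by
    have hc := mul_inv_cancel₀ hne
    calc S.pr S.Ki (star S.a)
        = S.pr S.Ki (star S.a) * (Qc q ((1/2:ℝ)) * (Qc q ((1/2:ℝ)))⁻¹) := by
          rw [hc, mul_one]
      _ = (Qc q ((1/2:ℝ)))⁻¹ := by rw [← mul_assoc, ← h, one_mul]
  rw [h3, ← Qc_neg S.hq0]

/-- values of the pairing of `K^m` with the generators -/
lemma prZP (m : ℤ) :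
    S.pr (zpowGen S.K S.Ki m) S.a = Qc q (-(m:ℝ)/2) ∧
    S.pr (zpowGen S.K S.Ki m) (star S.a) = Qc q ((m:ℝ)/2) ∧
    S.pr (zpowGen S.K S.Ki m) S.b = 0 ∧
    S.pr (zpowGen S.K S.Ki m) (star S.b) = 0 := by
  induction m using Int.induction_on with
  | zero =>
    rw [zpowGen_zero]
    refine ⟨?_, ?_, ?_, ?_⟩ <;>
      simp [S.hunitU, S.hεa, S.hεas, S.hεb, S.hεbs, Qc_zero]
  | succ m ih =>
    obtain ⟨ha, has, hb, hbs⟩ := ih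
    have hz := zpowGen_mul_pow S.K S.Ki S.hKi S.hiK m 1
    rw [pow_one] at hz
    push_cast at hz
    rw [← hz]
    refine ⟨?_, ?_, ?_, ?_⟩
    · rw [S.prMul_a]
      simp only [ha, has, hb, hbs, S.hKa, S.hKb]
      rw [Qc_mul S.hq0]
      simp only [mul_zero, zero_mul, sub_zero]
      congr 1
      push_cast
      ring
    · rw [S.prMul_as]
      simp only [ha, has, hb, hbs, S.hKas, S.hKbs]
      rw [Qc_mul S.hq0]
      simp only [mul_zero, zero_mul, sub_zero]
      congr 1
      push_cast
      ring
    · rw [S.prMul_b]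
      simp only [ha, has, hb, hbs, S.hKa, S.hKb]
      simp
    · rw [S.prMul_bs]
      simp only [ha, has, hb, hbs, S.hKas, S.hKbs]
      simp
  | pred m ih =>
    obtain ⟨ha, has, hb, hbs⟩ := ih
    have hz := zpowGen_mul_ipow S.K S.Ki S.hKi S.hiK (-m) 1
    rw [pow_one] at hz
    push_cast at hz
    rw [← hz]
    refine ⟨?_, ?_, ?_, ?_⟩
    · rw [S.prMul_a]
      simp only [ha, has, hb, hbs, S.prKi_a, S.prKi_b]
      rw [Qc_mul S.hq0]
      simp only [mul_zero, zero_mul, sub_zero]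
      congr 1
      push_cast
      ring
    · rw [S.prMul_as]
      simp only [ha, has, hb, hbs, S.prKi_as, S.prKi_bs]
      rw [Qc_mul S.hq0]
      simp only [mul_zero, zero_mul, sub_zero]
      congr 1
      push_cast
      ring
    · rw [S.prMul_b]
      simp only [ha, has, hb, hbs, S.prKi_a, S.prKi_b]
      simp
    · rw [S.prMul_bs]
      simp only [ha, has, hb, hbs, S.prKi_as, S.prKi_bs]
      simp

lemma prMulE_a (X : U) : S.pr (X * S.E) S.a = -(q:ℂ) * S.pr X (star S.b) := by
  rw [S.prMul_a, S.hEa, S.hEb]; ring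

lemma prMulE_as (X : U) : S.pr (X * S.E) (star S.a) = 0 := by
  rw [S.prMul_as, S.hEas, S.hEbs]; ring

lemma prMulE_b (X : U) : S.pr (X * S.E) S.b = S.pr X (star S.a) := by
  rw [S.prMul_b, S.hEa, S.hEb]; ring

lemma prMulE_bs (X : U) : S.pr (X * S.E) (star S.b) = 0 := by
  rw [S.prMul_bs, S.hEas, S.hEbs]; ring

lemma prMulF_a (X : U) : S.pr (X * S.F) S.a = 0 := by
  rw [S.prMul_a, S.hFa, S.hFb]; ring

lemma prMulF_as (X : U) : S.pr (X * S.F) (star S.a) = S.pr X S.b := by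
  rw [S.prMul_as, S.hFas, S.hFbs']
  field_simp
  rw [mul_div_cancel_left₀ _ (hqc' S.hq0)]; ring

lemma prMulF_b (X : U) : S.pr (X * S.F) S.b = 0 := by
  rw [S.prMul_b, S.hFa, S.hFb]; ring

lemma prMulF_bs (X : U) : S.pr (X * S.F) (star S.b) = -((q:ℂ))⁻¹ * S.pr X S.a := by
  rw [S.prMul_bs, S.hFas, S.hFbs']; ring

lemma T_succF (m : ℤ) (k j : ℕ) : S.T m k (j+1) = S.T m k j * S.F := by
  rw [T, T, pow_succ, ← mul_assoc]

lemma T_succE (m : ℤ) (k : ℕ) : S.T m (k+1) 0 = S.T m k 0 * S.E := by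
  simp only [T, pow_zero, mul_one, pow_succ, mul_assoc]

lemma T_zero (m : ℤ) : S.T m 0 0 = zpowGen S.K S.Ki m := by
  simp [T]

/-- the full table of pairings of normally ordered monomials with the generators -/
lemma table : ∀ j k (m : ℤ),
    (S.pr (S.T m k j) S.a = if k = 0 ∧ j = 0 then Qc q (-(m:ℝ)/2) else 0) ∧
    (S.pr (S.T m k j) (star S.a) =
      if (k = 0 ∧ j = 0) ∨ (k = 1 ∧ j = 1) then Qc q ((m:ℝ)/2) else 0) ∧
    (S.pr (S.T m k j) S.b = if k = 1 ∧ j = 0 then Qc q ((m:ℝ)/2) else 0) ∧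
    (S.pr (S.T m k j) (star S.b) =
      if k = 0 ∧ j = 1 then -((q:ℂ))⁻¹ * Qc q (-(m:ℝ)/2) else 0) := by
  intro j
  induction j with
  | zero =>
    intro k
    induction k with
    | zero =>
      intro m
      obtain ⟨h1, h2, h3, h4⟩ := S.prZP m
      rw [T_zero]
      refine ⟨?_, ?_, ?_, ?_⟩ <;> simp [h1, h2, h3, h4]
    | succ k ih =>
      intro m
      obtain ⟨h1, h2, h3, h4⟩ := ih m
      rw [T_succE]
      refine ⟨?_, ?_, ?_, ?_⟩
      · rw [S.prMulE_a, h4]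
        simp
      · rw [S.prMulE_as]
        simp
      · rw [S.prMulE_b, h2]
        by_cases hk : k = 0 <;> simp [hk]
      · rw [S.prMulE_bs]
        simp
  | succ j ih =>
    intro k m
    obtain ⟨h1, h2, h3, h4⟩ := ih k m
    rw [T_succF]
    refine ⟨?_, ?_, ?_, ?_⟩
    · rw [S.prMulF_a]
      simp
    · rw [S.prMulF_as, h3]
      by_cases hk : k = 1 <;> by_cases hj : j = 0 <;> simp [hk, hj]
    · rw [S.prMulF_b]
      simp
    · rw [S.prMulF_bs, h1]
      by_cases hk : k = 0 <;> by_cases hj : j = 0 <;> simp [hk, hj]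

lemma tableA (k j : ℕ) (m : ℤ) :
    S.pr (S.T m k j) S.a = if k = 0 ∧ j = 0 then Qc q (-(m:ℝ)/2) else 0 := (S.table j k m).1

lemma tableB (k j : ℕ) (m : ℤ) :
    S.pr (S.T m k j) S.b = if k = 1 ∧ j = 0 then Qc q ((m:ℝ)/2) else 0 := (S.table j k m).2.2.1

lemma tableC (k j : ℕ) (m : ℤ) :
    S.pr (S.T m k j) (-((q:ℂ) • star S.b)) = if k = 0 ∧ j = 1 then Qc q (-(m:ℝ)/2) else 0 := by
  rw [map_neg, map_smul, smul_eq_mul, (S.table j k m).2.2.2]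
  by_cases hk : k = 0 <;> by_cases hj : j = 1 <;> simp [hk, hj]
  rw [← mul_assoc, mul_inv_cancel₀ (hqc' S.hq0), one_mul]

lemma epsZP (m : ℤ) : S.εU (zpowGen S.K S.Ki m) = 1 := by
  rw [zpowGen]
  split_ifs
  · rw [map_pow, S.hεK, one_pow]
  · rw [map_pow, S.hεKi, one_pow]

lemma epsT (m : ℤ) (n l : ℕ) : S.εU (S.T m n l) = if n = 0 ∧ l = 0 then 1 else 0 := by
  rw [T, map_mul, map_mul, map_pow, map_pow, S.epsZP, S.hεE, S.hεF, one_mul]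
  by_cases h1 : n = 0 <;> by_cases h2 : l = 0 <;> simp [h1, h2]

lemma DGen (X W Wi : U) (c : ℂ) (hΔX : S.ΔU X = X ⊗ₜ W + Wi ⊗ₜ X)
    (hXW : X * W = c⁻¹ • (W * X)) (hXWi : X * Wi = c • (Wi * X)) (n : ℕ) :
    S.ΔU (X ^ n) = ∑ k ∈ Finset.range (n+1),
      gam c n k • ((Wi ^ (n-k) * X ^ k) ⊗ₜ[ℂ] (W ^ k * X ^ (n-k))) := by
  have hXp_W : ∀ p : ℕ, X ^ p * W = c⁻¹ ^ p • (W * X ^ p) := fun p => by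
    have h := pow_mul_pow_smul X W c⁻¹ hXW p 1
    simpa using h
  have hXp_Wi : ∀ p : ℕ, X ^ p * Wi = c ^ p • (Wi * X ^ p) := fun p => by
    have h := pow_mul_pow_smul X Wi c hXWi p 1
    simpa using h
  induction n with
  | zero => simp [gam, Algebra.TensorProduct.one_def]
  | succ n ih =>
    rw [pow_succ, map_mul, ih, hΔX, Finset.sum_mul]
    have step : ∀ k ∈ Finset.range (n+1),
        (gam c n k • ((Wi^(n-k) * X^k) ⊗ₜ[ℂ] (W^k * X^(n-k)))) * (X ⊗ₜ[ℂ] W + Wi ⊗ₜ[ℂ] X)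
        = (gam c n k * c⁻¹^(n-k)) • ((Wi^(n-k) * X^(k+1)) ⊗ₜ[ℂ] (W^(k+1) * X^(n-k)))
          + (gam c n k * c^k) • ((Wi^(n-k+1) * X^k) ⊗ₜ[ℂ] (W^k * X^(n-k+1))) := by
      intro k hk
      rw [mul_add]
      congr 1
      · rw [smul_mul_assoc, Algebra.TensorProduct.tmul_mul_tmul, mul_assoc (Wi ^ (n-k)),
          ← pow_succ, mul_assoc (W ^ k), hXp_W (n-k), mul_smul_comm, ← mul_assoc (W ^ k) W,
          ← pow_succ, tmul_smul, smul_smul]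
      · rw [smul_mul_assoc, Algebra.TensorProduct.tmul_mul_tmul, mul_assoc (Wi ^ (n-k)),
          hXp_Wi k, mul_smul_comm, ← mul_assoc (Wi ^ (n-k)) Wi, ← pow_succ,
          mul_assoc (W ^ k), ← pow_succ, ← smul_tmul', smul_smul]
    rw [Finset.sum_congr rfl step, Finset.sum_add_distrib]
    have hg : ∀ k, k ∈ Finset.range (n+1) →
        (gam c n k * c^k) • ((Wi^(n-k+1) * X^k) ⊗ₜ[ℂ] (W^k * X^(n-k+1)))
        = (gam c n k * c^k) • ((Wi^(n+1-k) * X^k) ⊗ₜ[ℂ] (W^k * X^(n+1-k))) := by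
      intro k hk
      simp only [Finset.mem_range] at hk
      have h : n - k + 1 = n + 1 - k := by omega
      rw [h]
    rw [Finset.sum_congr rfl hg]
    have key := Finset.sum_range_succ' (fun k => (gam c n k * c^k) •
      ((Wi^(n+1-k) * X^k) ⊗ₜ[ℂ] (W^k * X^(n+1-k)))) (n+1)
    rw [Finset.sum_range_succ] at key
    rw [gam_of_lt c n (n+1) (by omega)] at key
    simp only [zero_mul, zero_smul, add_zero, Nat.sub_zero, pow_zero, mul_one] at key
    rw [key]
    rw [Finset.sum_range_succ' (fun k => gam c (n+1) k •
      ((Wi^(n+1-k) * X^k) ⊗ₜ[ℂ] (W^k * X^(n+1-k)))) (n+1)]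
    simp only [Nat.sub_zero, pow_zero, mul_one]
    have hsplit : ∀ k ∈ Finset.range (n+1),
        gam c (n+1) (k+1) • ((Wi^(n+1-(k+1)) * X^(k+1)) ⊗ₜ[ℂ] (W^(k+1) * X^(n+1-(k+1))))
        = (gam c n (k+1) * c^(k+1)) • ((Wi^(n+1-(k+1)) * X^(k+1)) ⊗ₜ[ℂ] (W^(k+1) * X^(n+1-(k+1))))
          + (gam c n k * c⁻¹^(n-k)) • ((Wi^(n-k) * X^(k+1)) ⊗ₜ[ℂ] (W^(k+1) * X^(n-k))) := by
      intro k hk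
      have hnk : n + 1 - (k + 1) = n - k := by omega
      simp only [hnk]
      rw [gam, add_smul]
      congr 1
      · rw [mul_comm]
      · rw [mul_comm]
    rw [Finset.sum_congr rfl hsplit, Finset.sum_add_distrib]
    have h0 : gam c (n+1) 0 = gam c n 0 := by rw [gam]
    rw [h0]
    abel

lemma DZ (m : ℤ) : S.ΔU (zpowGen S.K S.Ki m) = zpowGen S.K S.Ki m ⊗ₜ[ℂ] zpowGen S.K S.Ki m := by
  rw [zpowGen]
  split_ifs
  · rw [map_pow, S.hΔK, Algebra.TensorProduct.tmul_pow]
  · rw [map_pow, S.hΔKi, Algebra.TensorProduct.tmul_pow]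

lemma slot1_eq (m : ℤ) (k j c1 c2 : ℕ) :
    zpowGen S.K S.Ki m * (S.Ki ^ c1 * S.E ^ k) * (S.Ki ^ c2 * S.F ^ j)
    = ((q:ℂ) ^ (k * c2)) • S.T (m - c1 - c2) k j := by
  have h1 := pow_mul_pow_smul S.E S.Ki (q:ℂ) S.hEKi k c2
  rw [T, ← zpowGen_mul_ipow S.K S.Ki S.hKi S.hiK (m - c1) c2,
    ← zpowGen_mul_ipow S.K S.Ki S.hKi S.hiK m c1]
  simp only [mul_assoc]
  rw [← mul_assoc (S.E ^ k) (S.Ki ^ c2), h1]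
  simp only [smul_mul_assoc, mul_smul_comm, mul_assoc]

lemma slot2_eq (m : ℤ) (k j e f : ℕ) :
    zpowGen S.K S.Ki m * (S.K ^ k * S.E ^ e) * (S.K ^ j * S.F ^ f)
    = (((q:ℂ))⁻¹ ^ (e * j)) • (S.T (m + k + j) e f) := by
  have h1 := pow_mul_pow_smul S.E S.K ((q:ℂ))⁻¹ S.hEK e j
  rw [T, ← zpowGen_mul_pow S.K S.Ki S.hKi S.hiK (m + k) j,
    ← zpowGen_mul_pow S.K S.Ki S.hKi S.hiK m k]
  simp only [mul_assoc]
  rw [← mul_assoc (S.E ^ e) (S.K ^ j), h1]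
  simp only [smul_mul_assoc, mul_smul_comm, mul_assoc]

lemma DT (m : ℤ) (n l : ℕ) :
    S.ΔU (S.T m n l) = ∑ k ∈ Finset.range (n+1), ∑ j ∈ Finset.range (l+1),
      (gam (q:ℂ) n k * gam ((q:ℂ))⁻¹ l j * (q:ℂ)^(k*(l-j)) * ((q:ℂ))⁻¹^((n-k)*j)) •
        (S.T (m - (n-k) - (l-j)) k j ⊗ₜ[ℂ] S.T (m+k+j) (n-k) (l-j)) := by
  have hFK' : S.F * S.K = (((q:ℂ))⁻¹)⁻¹ • (S.K * S.F) := by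
    rw [inv_inv]; exact S.hFK
  rw [T, map_mul, map_mul, S.DZ, S.DGen S.E S.K S.Ki (q:ℂ) S.hΔE S.hEK S.hEKi n,
    S.DGen S.F S.K S.Ki ((q:ℂ))⁻¹ S.hΔF hFK' S.hFKi l]
  rw [Finset.mul_sum, Finset.sum_comm]
  apply Finset.sum_congr rfl
  intro j hj
  rw [Finset.mul_sum, Finset.sum_mul]
  apply Finset.sum_congr rfl
  intro k hk
  simp only [mul_smul_comm, smul_mul_assoc, smul_smul]
  rw [Algebra.TensorProduct.tmul_mul_tmul, Algebra.TensorProduct.tmul_mul_tmul,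
    S.slot1_eq, S.slot2_eq]
  simp only [smul_tmul', tmul_smul, smul_smul]
  have h1 : (m - ((n-k : ℕ) : ℤ) - ((l-j : ℕ) : ℤ)) = m - ((n:ℤ) - (k:ℤ)) - ((l:ℤ) - (j:ℤ)) := by
    simp only [Finset.mem_range] at hk hj
    omega
  rw [h1]
  congr 1
  ring

lemma PLa (m : ℤ) (n l : ℕ) (z : P) :
    S.pr (S.T m n l) (S.a * z) = Qc q (((n:ℝ) + l - m)/2) * S.pr (S.T m n l) z := by
  rw [S.hmulP, S.DT]
  simp only [map_sum, map_smul, TensorProduct.map_tmul, TensorProduct.dualDistrib_apply,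
    LinearMap.sum_apply, LinearMap.smul_apply, smul_eq_mul]
  rw [Finset.sum_eq_single_of_mem (0:ℕ) (Finset.mem_range.mpr (Nat.succ_pos n))]
  · rw [Finset.sum_eq_single_of_mem (0:ℕ) (Finset.mem_range.mpr (Nat.succ_pos l))]
    · rw [S.tableA]
      simp only [gam_zero, Nat.sub_zero, Nat.cast_zero, mul_zero, zero_mul, pow_zero,
        Nat.mul_zero, one_mul, mul_one, add_zero, sub_zero, and_self, if_true]
      congr 2
      push_cast
      ring
    · intro j hj hjne
      rw [S.tableA]
      simp [hjne]
  · intro k hk hkne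
    apply Finset.sum_eq_zero
    intro j hj
    rw [S.tableA]
    simp [hkne]

lemma PLb0 (m : ℤ) (l : ℕ) (z : P) : S.pr (S.T m 0 l) (S.b * z) = 0 := by
  rw [S.hmulP, S.DT]
  simp only [map_sum, map_smul, TensorProduct.map_tmul, TensorProduct.dualDistrib_apply,
    LinearMap.sum_apply, LinearMap.smul_apply, smul_eq_mul]
  apply Finset.sum_eq_zero
  intro k hk
  apply Finset.sum_eq_zero
  intro j hj
  simp only [Finset.mem_range] at hk
  have hkne : k ≠ 1 := by omega
  rw [S.tableB]
  simp [hkne]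

lemma PLb (m : ℤ) (n l : ℕ) (z : P) :
    S.pr (S.T m (n+1) l) (S.b * z) =
      (gam (q:ℂ) (n+1) 1 * (q:ℂ)^l * Qc q (((m:ℝ) - n - l)/2)) * S.pr (S.T (m+1) n l) z := by
  rw [S.hmulP, S.DT]
  simp only [map_sum, map_smul, TensorProduct.map_tmul, TensorProduct.dualDistrib_apply,
    LinearMap.sum_apply, LinearMap.smul_apply, smul_eq_mul]
  rw [Finset.sum_eq_single_of_mem (1:ℕ) (Finset.mem_range.mpr (by omega))]
  · rw [Finset.sum_eq_single_of_mem (0:ℕ) (Finset.mem_range.mpr (Nat.succ_pos l))]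
    · rw [S.tableB]
      simp only [gam_zero, Nat.sub_zero, Nat.cast_zero, Nat.cast_one, mul_zero, zero_mul,
        pow_zero, Nat.mul_zero, one_mul, mul_one, add_zero, sub_zero, and_self, if_true,
        Nat.add_sub_cancel]
      rw [← mul_assoc]
      congr 2
      congr 1
      push_cast
      ring
    · intro j hj hjne
      rw [S.tableB]
      simp [hjne]
  · intro k hk hkne
    apply Finset.sum_eq_zero
    intro j hj
    rw [S.tableB]
    simp [hkne]

lemma PLc0 (m : ℤ) (n : ℕ) (z : P) : S.pr (S.T m n 0) (-((q:ℂ) • star S.b) * z) = 0 := by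
  rw [S.hmulP, S.DT]
  simp only [map_sum, map_smul, TensorProduct.map_tmul, TensorProduct.dualDistrib_apply,
    LinearMap.sum_apply, LinearMap.smul_apply, smul_eq_mul]
  apply Finset.sum_eq_zero
  intro k hk
  apply Finset.sum_eq_zero
  intro j hj
  simp only [Finset.mem_range] at hj
  have hjne : j ≠ 1 := by omega
  rw [S.tableC]
  simp [hjne]

lemma PLc (m : ℤ) (n l : ℕ) (z : P) :
    S.pr (S.T m n (l+1)) (-((q:ℂ) • star S.b) * z) =
      (gam ((q:ℂ))⁻¹ (l+1) 1 * ((q:ℂ))⁻¹^n * Qc q (((n:ℝ) + l - m)/2)) *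
        S.pr (S.T (m+1) n l) z := by
  rw [S.hmulP, S.DT]
  simp only [map_sum, map_smul, TensorProduct.map_tmul, TensorProduct.dualDistrib_apply,
    LinearMap.sum_apply, LinearMap.smul_apply, smul_eq_mul]
  rw [Finset.sum_eq_single_of_mem (0:ℕ) (Finset.mem_range.mpr (Nat.succ_pos n))]
  · rw [Finset.sum_eq_single_of_mem (1:ℕ) (Finset.mem_range.mpr (by omega))]
    · rw [S.tableC]
      simp only [gam_zero, Nat.sub_zero, Nat.cast_zero, Nat.cast_one, mul_zero, zero_mul,
        pow_zero, Nat.mul_zero, Nat.mul_one, one_mul, mul_one, add_zero, sub_zero, zero_add,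
        and_self, if_true, Nat.add_sub_cancel]
      rw [← mul_assoc]
      congr 2
      congr 1
      push_cast
      ring
    · intro j hj hjne
      rw [S.tableC]
      simp [hjne]
  · intro k hk hkne
    apply Finset.sum_eq_zero
    intro j hj
    rw [S.tableC]
    simp [hkne]

lemma ofReal_rpow (x : ℝ) : ((q ^ x : ℝ) : ℂ) = Qc q x := rfl

theorem main : ∀ (r s t : ℕ) (m : ℤ) (n l : ℕ),
    S.pr (S.T m n l) (S.a ^ r * S.b ^ s * (-((q:ℂ) • star S.b)) ^ t) =
      if s = n ∧ t = l then
        ((q ^ (((m : ℝ) * (-(r : ℝ) + (s : ℝ) - (t : ℝ))) / 2) *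
          q ^ (((r : ℝ) * ((n : ℝ) + (l : ℝ))) / 2) * Gfun q n * Gfun q l : ℝ) : ℂ)
      else 0 := by
  intro r
  induction r with
  | zero =>
    intro s
    induction s with
    | zero =>
      intro t
      induction t with
      | zero =>
        intro m n l
        simp only [pow_zero, one_mul, mul_one]
        rw [S.hunitP, S.epsT]
        by_cases h1 : n = 0
        · by_cases h2 : l = 0
          · subst h1
            subst h2
            rw [if_pos ⟨rfl, rfl⟩, if_pos ⟨rfl, rfl⟩]
            norm_num [Gfun_zero]
          · rw [if_neg (by tauto), if_neg (fun hh => h2 hh.2.symm)]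
        · rw [if_neg (by tauto), if_neg (fun hh => h1 hh.1.symm)]
      | succ t iht =>
        intro m n l
        rw [pow_succ' (-((q:ℂ) • star S.b)) t]
        simp only [pow_zero, one_mul]
        rcases l with _ | l'
        · rw [S.PLc0, if_neg (by omega)]
        · rw [S.PLc]
          have h := iht (m+1) n l'
          simp only [pow_zero, one_mul] at h
          rw [h]
          by_cases hc : (0 = n ∧ t = l')
          · obtain ⟨hc1, hc2⟩ := hc
            subst hc2
            subst hc1
            rw [if_pos ⟨rfl, rfl⟩, if_pos ⟨rfl, rfl⟩]
            rw [gam_inv_one _ (hqc' S.hq0)]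
            simp only [Complex.ofReal_mul, ofReal_rpow, pow_zero, mul_one]
            rw [Gfun_succ_c S.hq0 S.hq1]
            have key : Qc q ((((0:ℕ):ℝ) + ((t:ℕ):ℝ) - ((m:ℤ):ℝ)) / 2) *
                (Qc q (((m+1:ℤ):ℝ) * (-((0:ℕ):ℝ) + ((0:ℕ):ℝ) - ((t:ℕ):ℝ)) / 2) *
                 Qc q (((0:ℕ):ℝ) * (((0:ℕ):ℝ) + ((t:ℕ):ℝ)) / 2)) =
                Qc q (((m:ℤ):ℝ) * (-((0:ℕ):ℝ) + ((0:ℕ):ℝ) - ((t+1:ℕ):ℝ)) / 2) *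
                Qc q (((0:ℕ):ℝ) * (((0:ℕ):ℝ) + ((t+1:ℕ):ℝ)) / 2) := by
              rw [Qc_mul S.hq0, Qc_mul S.hq0, Qc_mul S.hq0]
              congr 1
              push_cast
              ring
            linear_combination (gam (q:ℂ) (t+1) 1 * ((Gfun q 0 : ℝ):ℂ) *
              ((Gfun q t : ℝ):ℂ)) * key
          · rw [if_neg (show ¬_ from by rintro ⟨x1, x2⟩; exact hc ⟨x1, by omega⟩),
              if_neg (show ¬_ from by rintro ⟨x1, x2⟩; exact hc ⟨x1, by omega⟩), mul_zero]
    | succ s ihs =>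
      intro t m n l
      rw [pow_succ' S.b s]
      simp only [pow_zero, one_mul]
      rw [mul_assoc]
      rcases n with _ | n'
      · rw [S.PLb0, if_neg (by omega)]
      · rw [S.PLb]
        have h := ihs t (m+1) n' l
        simp only [pow_zero, one_mul] at h
        rw [h]
        by_cases hc : (s = n' ∧ t = l)
        · obtain ⟨hc1, hc2⟩ := hc
          subst hc2
          subst hc1
          rw [if_pos ⟨rfl, rfl⟩, if_pos ⟨rfl, rfl⟩]
          simp only [Complex.ofReal_mul, ofReal_rpow]
          rw [Gfun_succ_c S.hq0 S.hq1, Qc_natCast S.hq0 t]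
          have key : Qc q ((t:ℕ):ℝ) * Qc q ((((m:ℤ):ℝ) - ((s:ℕ):ℝ) - ((t:ℕ):ℝ))/2) *
              Qc q (((m+1:ℤ):ℝ) * (-((0:ℕ):ℝ) + ((s:ℕ):ℝ) - ((t:ℕ):ℝ))/2) *
              Qc q (((0:ℕ):ℝ) * (((s:ℕ):ℝ) + ((t:ℕ):ℝ))/2) =
              Qc q (((m:ℤ):ℝ) * (-((0:ℕ):ℝ) + ((s+1:ℕ):ℝ) - ((t:ℕ):ℝ))/2) *
              Qc q (((0:ℕ):ℝ) * (((s+1:ℕ):ℝ) + ((t:ℕ):ℝ))/2) := by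
            rw [Qc_mul S.hq0, Qc_mul S.hq0, Qc_mul S.hq0, Qc_mul S.hq0]
            congr 1
            push_cast
            ring
          linear_combination (gam (q:ℂ) (s+1) 1 * ((Gfun q s : ℝ):ℂ) *
            ((Gfun q t : ℝ):ℂ)) * key
        · rw [if_neg (show ¬_ from by rintro ⟨x1, x2⟩; exact hc ⟨by omega, x2⟩),
            if_neg (show ¬_ from by rintro ⟨x1, x2⟩; exact hc ⟨by omega, x2⟩), mul_zero]
  | succ r ihr =>
    intro s t m n l
    rw [pow_succ' S.a r, mul_assoc S.a (S.a ^ r) (S.b ^ s), mul_assoc S.a, S.PLa]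
    rw [ihr s t m n l]
    by_cases hc : (s = n ∧ t = l)
    · rw [if_pos hc, if_pos hc]
      simp only [Complex.ofReal_mul, ofReal_rpow]
      have key : Qc q ((((n:ℕ):ℝ) + ((l:ℕ):ℝ) - ((m:ℤ):ℝ))/2) *
          (Qc q (((m:ℤ):ℝ) * (-((r:ℕ):ℝ) + ((s:ℕ):ℝ) - ((t:ℕ):ℝ))/2) *
           Qc q (((r:ℕ):ℝ) * (((n:ℕ):ℝ) + ((l:ℕ):ℝ))/2)) =
          Qc q (((m:ℤ):ℝ) * (-((r+1:ℕ):ℝ) + ((s:ℕ):ℝ) - ((t:ℕ):ℝ))/2) *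
          Qc q (((r+1:ℕ):ℝ) * (((n:ℕ):ℝ) + ((l:ℕ):ℝ))/2) := by
        rw [Qc_mul S.hq0, Qc_mul S.hq0, Qc_mul S.hq0]
        congr 1
        push_cast
        ring
      linear_combination (((Gfun q n : ℝ):ℂ) * ((Gfun q l : ℝ):ℂ)) * key
    · rw [if_neg hc, if_neg hc, mul_zero]

end Setup

end PairingProof

/-- The pairing formula between `U_q(su(2))` and `Pol(SU_q(2))`:
`⟨K^m E^n F^l, a^r b^s (-qb*)^t⟩ = δ_{s,n} δ_{t,l} q^{m(-r+s-t)/2} q^{r(n+l)/2} G_n(q) G_l(q)`,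
for the Hopf pairing determined by `⟨K,a⟩ = q^{-1/2}`, `⟨K,a*⟩ = q^{1/2}`, `⟨E,b⟩ = 1`,
`⟨F,-qb*⟩ = 1` and zero on all other pairs of generators. -/
theorem pairing_formula (q : ℝ) (hq0 : 0 < q) (hq1 : q < 1)
    {U P : Type} [Ring U] [Algebra ℂ U] [StarRing U] [Ring P] [Algebra ℂ P] [StarRing P]
    -- the generators of U_q(su(2)) and their relations
    (K Ki E F : U)
    (hKi : Ki * K = 1) (hiK : K * Ki = 1)
    (hKE : K * E = (q : ℂ) • (E * K)) (hKF : K * F = ((q : ℂ))⁻¹ • (F * K))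
    (hKs : star K = K) (hEs : star E = F)
    (hEF : E * F - F * E =
      (((q - q⁻¹)⁻¹ : ℝ) : ℂ) • ((K * K) - (Ki * Ki)))
    -- the generators of Pol(SU_q(2)) and their relations
    (a b : P)
    (p1 : star a * a + star b * b = 1)
    (p2 : a * star a + ((q : ℂ) ^ 2) • (b * star b) = 1)
    (p3 : a * b = (q : ℂ) • (b * a))
    (p4 : star a * b = ((q : ℂ))⁻¹ • (b * star a))
    (p5 : b * star b = star b * b)
    -- the comultiplications
    (ΔU : U →ₐ[ℂ] U ⊗[ℂ] U)
    (hΔK : ΔU K = K ⊗ₜ K) (hΔKi : ΔU Ki = Ki ⊗ₜ Ki)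
    (hΔE : ΔU E = E ⊗ₜ K + Ki ⊗ₜ E) (hΔF : ΔU F = F ⊗ₜ K + Ki ⊗ₜ F)
    (ΔP : P →ₐ[ℂ] P ⊗[ℂ] P)
    (hΔa : ΔP a = a ⊗ₜ a - (q : ℂ) • (star b ⊗ₜ b))
    (hΔb : ΔP b = b ⊗ₜ a + star a ⊗ₜ b)
    (hΔas : ΔP (star a) = star a ⊗ₜ star a - (q : ℂ) • (b ⊗ₜ star b))
    (hΔbs : ΔP (star b) = star b ⊗ₜ star a + a ⊗ₜ star b)
    -- the counits
    (εU : U →ₐ[ℂ] ℂ) (hεK : εU K = 1) (hεKi : εU Ki = 1) (hεE : εU E = 0) (hεF : εU F = 0)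
    (εP : P →ₐ[ℂ] ℂ) (hεa : εP a = 1) (hεas : εP (star a) = 1) (hεb : εP b = 0)
    (hεbs : εP (star b) = 0)
    -- the Hopf pairing
    (pr : U →ₗ[ℂ] Dual ℂ P)
    (hmulP : ∀ (x : U) (y z : P),
      pr x (y * z) = TensorProduct.dualDistrib ℂ P P (TensorProduct.map pr pr (ΔU x)) (y ⊗ₜ z))
    (hmulU : ∀ (x y : U) (z : P),
      pr (x * y) z = TensorProduct.dualDistrib ℂ P P (pr x ⊗ₜ pr y) (ΔP z))
    (hunitP : ∀ x : U, pr x 1 = εU x)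
    (hunitU : ∀ y : P, pr 1 y = εP y)
    -- the generator pairings
    (hKa : pr K a = ((q ^ (-(1/2 : ℝ)) : ℝ) : ℂ))
    (hKas : pr K (star a) = ((q ^ ((1/2 : ℝ)) : ℝ) : ℂ))
    (hEb : pr E b = 1)
    (hFbs : pr F (-((q : ℂ) • star b)) = 1)
    (hKb : pr K b = 0) (hKbs : pr K (star b) = 0)
    (hEa : pr E a = 0) (hEas : pr E (star a) = 0) (hEbs : pr E (star b) = 0)
    (hFa : pr F a = 0) (hFas : pr F (star a) = 0) (hFb : pr F b = 0) :
    ∀ (m : ℤ) (n l r s t : ℕ),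
      pr (zpowGen K Ki m * E ^ n * F ^ l) (a ^ r * b ^ s * (-((q : ℂ) • star b)) ^ t) =
        if s = n ∧ t = l then
          ((q ^ (((m : ℝ) * (-(r : ℝ) + (s : ℝ) - (t : ℝ))) / 2) *
            q ^ (((r : ℝ) * ((n : ℝ) + (l : ℝ))) / 2) * Gfun q n * Gfun q l : ℝ) : ℂ)
        else 0 := by
  intro m n l r s t
  exact PairingProof.Setup.main (S := ⟨K, Ki, E, F, a, b, ΔU, ΔP, εU, εP, pr, hq0, hq1, hKi, hiK,
    hKE, hKF, hΔK, hΔKi, hΔE, hΔF, hΔa, hΔb, hΔas, hΔbs, hεK, hεKi, hεE, hεF, hεa, hεas, hεb,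
    hεbs, hmulP, hmulU, hunitP, hunitU, hKa, hKas, hEb, hFbs, hKb, hKbs, hEa, hEas, hEbs,
    hFa, hFas, hFb⟩) r s t m n l
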